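/- Let f be complex analytic on a neighborhood of (0,0) ∈ ℂ × ℂ and let α : ℂ → ℂ be analytic near 0 with α(0) = 0. For each natural number e ≥ 1 define Λ(e) := inf over u ∈ ℂ of min( ord₀(y ↦ f_x(α(y) + u y^e, y)), ord₀(y ↦ f_y(α(y) + u y^e, y)) ), an element of ℕ ∪ {∞}. Then: (i) Λ is monotone nondecreasing, i.e. e ≤ e' implies Λ(e) ≤ Λ(e'); and (ii) if the functions y ↦ f_x(α(y), y) and y ↦ f_y(α(y), y) do not both vanish identically near 0 and L denotes the minimum of their vanishing orders at 0, then Λ(e) = L for every e > L. (This is the monotonicity and eventual stabilization of the generic gradient order L_gr(α,e) in the perturbation degree e.) -/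

import Mathlib

open Filter

/-- The vanishing order at `0` of a function `u : ℂ → ℂ`: the least `n` such that the
`n`-th Taylor coefficient of `u` at `0` is nonzero, in `ℕ∞` (`⊤` if none is). -/
noncomputable def ord₀ (u : ℂ → ℂ) : ℕ∞ :=
  sInf ((fun n : ℕ => (n : ℕ∞)) '' {n : ℕ | iteratedDeriv n u 0 ≠ 0})

/-- The generic gradient order `Λ(e)`: the infimum over `u ∈ ℂ` of the minimum of the
vanishing orders at `0` of `y ↦ f_x(α(y)+u yᵉ, y)` and `y ↦ f_y(α(y)+u yᵉ, y)`. -/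
noncomputable def gradOrdPert (f : ℂ × ℂ → ℂ) (α : ℂ → ℂ) (e : ℕ) : ℕ∞ :=
  ⨅ u : ℂ,
    min (ord₀ (fun y => fderiv ℂ f (α y + u * y ^ e, y) (1, 0)))
        (ord₀ (fun y => fderiv ℂ f (α y + u * y ^ e, y) (0, 1)))


section Toolkit
/-- vanishing to order `N` at `0`. -/
def Vord (N : ℕ) (u : ℂ → ℂ) : Prop := ∀ n < N, iteratedDeriv n u 0 = 0

theorem vord_mono {N M : ℕ} {u : ℂ → ℂ} (h : Vord N u) (hMN : M ≤ N) : Vord M u :=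
  fun n hn => h n (lt_of_lt_of_le hn hMN)

theorem iterD_congr {u v : ℂ → ℂ} {x : ℂ} (h : u =ᶠ[nhds x] v) (n : ℕ) :
    iteratedDeriv n u x = iteratedDeriv n v x := by
  induction n generalizing u v with
  | zero => simpa [iteratedDeriv_zero] using h.eq_of_nhds
  | succ n ih => rw [iteratedDeriv_succ', iteratedDeriv_succ']; exact ih h.deriv

theorem iteratedDeriv_fps {u : ℂ → ℂ} {p : FormalMultilinearSeries ℂ ℂ ℂ}
    (hp : HasFPowerSeriesAt u p 0) (n : ℕ) : iteratedDeriv n u 0 = n.factorial • p.coeff n := by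
  obtain ⟨r, hr⟩ := hp
  rw [iteratedDeriv_eq_iteratedFDeriv, ← hr.factorial_smul (1 : ℂ) n,
    FormalMultilinearSeries.apply_eq_pow_smul_coeff, one_pow, one_smul]

theorem analyticAt_deriv {u : ℂ → ℂ} {x : ℂ} (hu : AnalyticAt ℂ u x) :
    AnalyticAt ℂ (deriv u) x := by
  obtain ⟨s, hs, hsa⟩ := hu.eventually_analyticAt.exists_mem
  exact (AnalyticOnNhd.deriv (fun z hz => hsa z hz)) x (mem_of_mem_nhds hs)

theorem exists_factor {N : ℕ} : ∀ {u : ℂ → ℂ}, AnalyticAt ℂ u 0 → Vord N u →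
    ∃ w, AnalyticAt ℂ w 0 ∧ ∀ y, u y = y ^ N * w y := by
  induction N with
  | zero => exact fun hu _ => ⟨_, hu, fun y => (one_mul _).symm⟩
  | succ N ih =>
    intro u hu hv
    have hu0 : u 0 = 0 := by simpa [iteratedDeriv_zero] using hv 0 (Nat.succ_pos N)
    obtain ⟨p, hp⟩ := hu
    have hds : HasFPowerSeriesAt (dslope u 0) p.fslope 0 := hp.has_fpower_series_dslope_fslope
    have heq : ∀ y, u y = y * dslope u 0 y := by
      intro y
      have h := sub_smul_dslope u 0 y
      rw [hu0, sub_zero, sub_zero, smul_eq_mul] at h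
      exact h.symm
    have hvd : Vord N (dslope u 0) := by
      intro n hn
      rw [iteratedDeriv_fps hds n, FormalMultilinearSeries.coeff_fslope]
      have h1 : iteratedDeriv (n + 1) u 0 = 0 := hv (n + 1) (by omega)
      rw [iteratedDeriv_fps hp (n + 1), nsmul_eq_mul, mul_eq_zero] at h1
      rcases h1 with h1 | h1
      · exact absurd h1 (by exact_mod_cast Nat.factorial_ne_zero (n + 1))
      · rw [h1, smul_zero]
    obtain ⟨w, hw, hwe⟩ := ih ⟨_, hds⟩ hvd
    refine ⟨w, hw, fun y => ?_⟩
    rw [heq y, hwe y, pow_succ]; ring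

theorem vord_pow_mul : ∀ (N : ℕ) {w : ℂ → ℂ}, AnalyticAt ℂ w 0 →
    Vord N (fun y => y ^ N * w y) := by
  intro N
  induction N with
  | zero => intro w _ n hn; omega
  | succ N ih =>
    intro w hw n hn
    match n with
    | 0 => simp [iteratedDeriv_zero]
    | (m + 1) =>
      rw [iteratedDeriv_succ']
      have hev : deriv (fun y : ℂ => y ^ (N + 1) * w y) =ᶠ[nhds (0 : ℂ)]
          (fun y => y ^ N * (((N + 1 : ℕ) : ℂ) * w y + y * deriv w y)) := by
        filter_upwards [hw.eventually_analyticAt] with y hy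
        have hwd : HasDerivAt w (deriv w y) y := hy.differentiableAt.hasDerivAt
        have h1 : HasDerivAt (fun y : ℂ => y ^ (N + 1) * w y)
            ((((N + 1 : ℕ) : ℂ) * y ^ (N + 1 - 1)) * w y + y ^ (N + 1) * deriv w y) y :=
          (hasDerivAt_pow (N + 1) y).mul hwd
        rw [h1.deriv]
        simp only [Nat.add_sub_cancel]
        ring
      rw [iterD_congr hev m]
      have hw2 : AnalyticAt ℂ (fun y : ℂ => ((N + 1 : ℕ) : ℂ) * w y + y * deriv w y) 0 :=
        (analyticAt_const.mul hw).add (analyticAt_id.mul (analyticAt_deriv hw))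
      exact ih hw2 m (by omega)

theorem vord_add {N : ℕ} {u v : ℂ → ℂ} (hu : AnalyticAt ℂ u 0) (hv : AnalyticAt ℂ v 0)
    (h1 : Vord N u) (h2 : Vord N v) : Vord N (fun y => u y + v y) := by
  obtain ⟨w1, hw1, he1⟩ := exists_factor hu h1
  obtain ⟨w2, hw2, he2⟩ := exists_factor hv h2
  have h : (fun y => u y + v y) = fun y => y ^ N * (w1 y + w2 y) := by
    funext y; rw [he1, he2]; ring
  rw [h]; exact vord_pow_mul N (hw1.add hw2)

theorem vord_mul_left {N : ℕ} {u v : ℂ → ℂ} (hu : AnalyticAt ℂ u 0) (h1 : Vord N u)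
    (hv : AnalyticAt ℂ v 0) : Vord N (fun y => v y * u y) := by
  obtain ⟨w1, hw1, he1⟩ := exists_factor hu h1
  have h : (fun y => v y * u y) = fun y => y ^ N * (v y * w1 y) := by
    funext y; rw [he1]; ring
  rw [h]; exact vord_pow_mul N (hv.mul hw1)

theorem vord_mul_right {N : ℕ} {u v : ℂ → ℂ} (hu : AnalyticAt ℂ u 0) (h1 : Vord N u)
    (hv : AnalyticAt ℂ v 0) : Vord N (fun y => u y * v y) := by
  obtain ⟨w1, hw1, he1⟩ := exists_factor hu h1
  have h : (fun y => u y * v y) = fun y => y ^ N * (w1 y * v y) := by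
    funext y; rw [he1]; ring
  rw [h]; exact vord_pow_mul N (hw1.mul hv)

theorem vord_deriv {N : ℕ} {γ : ℂ → ℂ} (h : Vord (N + 1) γ) : Vord N (deriv γ) := by
  intro n hn
  have := h (n + 1) (by omega)
  rwa [iteratedDeriv_succ'] at this

theorem enat_le_of_forall {a b : ℕ∞} (h : ∀ n : ℕ, (n : ℕ∞) ≤ a → (n : ℕ∞) ≤ b) : a ≤ b := by
  induction a using ENat.recTopCoe with
  | top =>
    induction b using ENat.recTopCoe with
    | top => exact le_rfl
    | coe m =>
      have := h (m + 1) le_top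
      exact absurd (by exact_mod_cast this) (by omega)
  | coe n => exact h n le_rfl

theorem ord₀_ge_iff {u : ℂ → ℂ} {N : ℕ} :
    (N : ℕ∞) ≤ sInf ((fun n : ℕ => (n : ℕ∞)) '' {n : ℕ | iteratedDeriv n u 0 ≠ 0}) ↔ Vord N u := by
  constructor
  · intro h n hn
    by_contra hne
    have h1 : sInf ((fun n : ℕ => (n : ℕ∞)) '' {n : ℕ | iteratedDeriv n u 0 ≠ 0}) ≤ (n : ℕ∞) :=
      sInf_le ⟨n, hne, rfl⟩
    have h2 : (N : ℕ∞) ≤ (n : ℕ∞) := le_trans h h1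
    exact absurd (by exact_mod_cast h2) (by omega)
  · intro h
    apply le_sInf
    rintro b ⟨m, hm, rfl⟩
    have hNm : ¬ m < N := fun hc => hm (h m hc)
    show (N : ℕ∞) ≤ (m : ℕ∞)
    exact_mod_cast Nat.le_of_not_lt hNm

end Toolkit

noncomputable def Dy (H : ℂ × ℂ → ℂ) : ℂ × ℂ → ℂ := fun p => fderiv ℂ H p (0, 1)
noncomputable def Dx (H : ℂ × ℂ → ℂ) : ℂ × ℂ → ℂ := fun p => fderiv ℂ H p (1, 0)

theorem analyticAt_clmApply {H : ℂ × ℂ → ℂ} {p : ℂ × ℂ} (hH : AnalyticAt ℂ H p) (v : ℂ × ℂ) :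
    AnalyticAt ℂ (fun q => fderiv ℂ H q v) p :=
  ((ContinuousLinearMap.apply ℂ ℂ v).analyticAt (fderiv ℂ H p)).comp hH.fderiv

theorem analyticAt_Dy {H : ℂ × ℂ → ℂ} {p : ℂ × ℂ} (hH : AnalyticAt ℂ H p) :
    AnalyticAt ℂ (Dy H) p := analyticAt_clmApply hH (0, 1)

theorem analyticAt_Dx {H : ℂ × ℂ → ℂ} {p : ℂ × ℂ} (hH : AnalyticAt ℂ H p) :
    AnalyticAt ℂ (Dx H) p := analyticAt_clmApply hH (1, 0)

theorem analyticAt_Dy_iter {H : ℂ × ℂ → ℂ} {p : ℂ × ℂ} (hH : AnalyticAt ℂ H p) (n : ℕ) :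
    AnalyticAt ℂ (Dy^[n] H) p := by
  induction n generalizing H with
  | zero => exact hH
  | succ n ih => rw [Function.iterate_succ_apply]; exact ih (analyticAt_Dy hH)

theorem deriv_slice_y {H : ℂ × ℂ → ℂ} {c y : ℂ} (h : DifferentiableAt ℂ H (c, y)) :
    deriv (fun t => H (c, t)) y = Dy H (c, y) := by
  have h1 : HasDerivAt (fun t : ℂ => ((c, t) : ℂ × ℂ)) (0, 1) y :=
    (hasDerivAt_const y c).prodMk (hasDerivAt_id y)
  exact (h.hasFDerivAt.comp_hasDerivAt y h1).deriv

theorem deriv_slice_x {H : ℂ × ℂ → ℂ} {c x : ℂ} (h : DifferentiableAt ℂ H (x, c)) :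
    deriv (fun t => H (t, c)) x = Dx H (x, c) := by
  have h1 : HasDerivAt (fun t : ℂ => ((t, c) : ℂ × ℂ)) (1, 0) x :=
    (hasDerivAt_id x).prodMk (hasDerivAt_const x c)
  exact (h.hasFDerivAt.comp_hasDerivAt x h1).deriv
theorem iteratedDeriv_slice : ∀ (n : ℕ) {H : ℂ × ℂ → ℂ} {c : ℂ}, AnalyticAt ℂ H (c, 0) →
    iteratedDeriv n (fun y => H (c, y)) 0 = (Dy^[n] H) (c, 0) := by
  intro n
  induction n with
  | zero => intro H c _; simp [iteratedDeriv_zero]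
  | succ n ih =>
    intro H c hH
    rw [iteratedDeriv_succ']
    have hten : Tendsto (fun t : ℂ => ((c, t) : ℂ × ℂ)) (nhds 0) (nhds (c, 0)) :=
      (continuous_const.prodMk continuous_id).continuousAt
    have hev : deriv (fun y => H (c, y)) =ᶠ[nhds (0 : ℂ)] fun y => Dy H (c, y) := by
      filter_upwards [hten.eventually hH.eventually_analyticAt] with t ht
      exact deriv_slice_y ht.differentiableAt
    rw [iterD_congr hev n, ih (analyticAt_Dy hH), ← Function.iterate_succ_apply]

theorem swap_DxDy {H : ℂ × ℂ → ℂ} {p : ℂ × ℂ} (hH : AnalyticAt ℂ H p) :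
    Dx (Dy H) p = Dy (Dx H) p := by
  have hd2 : DifferentiableAt ℂ (fderiv ℂ H) p := hH.fderiv.differentiableAt
  have hev : ∀ᶠ q in nhds p, HasFDerivAt H (fderiv ℂ H q) q := by
    filter_upwards [hH.eventually_analyticAt] with q hq
    exact hq.differentiableAt.hasFDerivAt
  have hsym := second_derivative_symmetric_of_eventually hev hd2.hasFDerivAt
  have e1 : ∀ v w : ℂ × ℂ, fderiv ℂ (fun q => fderiv ℂ H q v) p w
      = fderiv ℂ (fderiv ℂ H) p w v := by
    intro v w
    have h3 : HasFDerivAt (fun q => fderiv ℂ H q v)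
        (((fderiv ℂ (fderiv ℂ H) p).flip) v) p := by
      have h4 := hd2.hasFDerivAt.clm_apply (hasFDerivAt_const v p)
      simpa using h4
    rw [h3.fderiv]; rfl
  show fderiv ℂ (fun q => fderiv ℂ H q (0, 1)) p (1, 0)
      = fderiv ℂ (fun q => fderiv ℂ H q (1, 0)) p (0, 1)
  rw [e1, e1, hsym]

theorem Dy_iter_congr : ∀ (n : ℕ) {u v : ℂ × ℂ → ℂ} {p : ℂ × ℂ}, u =ᶠ[nhds p] v →
    Dy^[n] u =ᶠ[nhds p] Dy^[n] v := by
  intro n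
  induction n with
  | zero => intro u v p h; exact h
  | succ n ih =>
    intro u v p h
    rw [Function.iterate_succ_apply, Function.iterate_succ_apply]
    refine ih ?_
    filter_upwards [h.fderiv (𝕜 := ℂ)] with q hq
    show fderiv ℂ u q (0, 1) = fderiv ℂ v q (0, 1)
    rw [hq]

theorem swap_iter : ∀ (n : ℕ) {H : ℂ × ℂ → ℂ} {p : ℂ × ℂ}, AnalyticAt ℂ H p →
    Dy^[n] (Dx H) p = Dx (Dy^[n] H) p := by
  intro n
  induction n with
  | zero => intro H p _; rfl
  | succ n ih =>
    intro H p hH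
    rw [Function.iterate_succ_apply]
    have h1 : Dy (Dx H) =ᶠ[nhds p] Dx (Dy H) := by
      filter_upwards [hH.eventually_analyticAt] with q hq
      exact (swap_DxDy hq).symm
    rw [(Dy_iter_congr n h1).eq_of_nhds, ih (analyticAt_Dy hH), ← Function.iterate_succ_apply]
theorem deriv_comp_curve {G : ℂ × ℂ → ℂ} {γ : ℂ → ℂ} (hG : AnalyticAt ℂ G (0, 0))
    (hγ : AnalyticAt ℂ γ 0) (hγ0 : γ 0 = 0) :
    deriv (fun y => G (γ y, y)) =ᶠ[nhds (0 : ℂ)]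
      fun y => deriv γ y * Dx G (γ y, y) + Dy G (γ y, y) := by
  have hφ : AnalyticAt ℂ (fun y : ℂ => (γ y, y)) 0 := hγ.prod analyticAt_id
  have hten : Tendsto (fun y : ℂ => ((γ y, y) : ℂ × ℂ)) (nhds 0) (nhds (0, 0)) := by
    have := hφ.continuousAt
    rwa [ContinuousAt, hγ0] at this
  filter_upwards [hten.eventually hG.eventually_analyticAt, hγ.eventually_analyticAt]
    with y h1 h2
  have hγd : HasDerivAt γ (deriv γ y) y := h2.differentiableAt.hasDerivAt
  have hcurve : HasDerivAt (fun t : ℂ => ((γ t, t) : ℂ × ℂ)) (deriv γ y, 1) y :=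
    hγd.prodMk (hasDerivAt_id y)
  have hd : HasDerivAt (fun t => G (γ t, t)) (fderiv ℂ G (γ y, y) (deriv γ y, 1)) y :=
    HasFDerivAt.comp_hasDerivAt (f := fun t : ℂ => ((γ t, t) : ℂ × ℂ)) y
      h1.differentiableAt.hasFDerivAt hcurve
  rw [hd.deriv]
  have hvec : ((deriv γ y, (1 : ℂ)) : ℂ × ℂ)
      = deriv γ y • ((1 : ℂ), (0 : ℂ)) + ((0 : ℂ), (1 : ℂ)) := by
    simp [Prod.ext_iff]
  rw [hvec, map_add, map_smul, smul_eq_mul]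
  rfl

theorem core1 : ∀ (N : ℕ) (G : ℂ × ℂ → ℂ), (∀ c : ℂ, AnalyticAt ℂ G (c, 0)) →
    (∀ (c : ℂ) (n : ℕ), n < N → Dy^[n] G (c, 0) = 0) →
    ∀ (γ : ℂ → ℂ), AnalyticAt ℂ γ 0 → γ 0 = 0 → Vord N (fun y => G (γ y, y)) := by
  intro N
  induction N with
  | zero => intro G _ _ γ _ _ n hn; omega
  | succ N ih =>
    intro G hG hvan γ hγ hγ0 n hn
    have hG0 : AnalyticAt ℂ G (0, 0) := hG 0
    match n with
    | 0 =>
      rw [iteratedDeriv_zero]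
      show G (γ 0, 0) = 0
      rw [hγ0]
      exact hvan 0 0 (by omega)
    | (m + 1) =>
      rw [iteratedDeriv_succ', iterD_congr (deriv_comp_curve hG0 hγ hγ0) m]
      have hφ : AnalyticAt ℂ (fun y : ℂ => (γ y, y)) 0 := hγ.prod analyticAt_id
      have hφ0 : ((γ 0, 0) : ℂ × ℂ) = ((0 : ℂ), (0 : ℂ)) := by rw [hγ0]
      have hDxφ : AnalyticAt ℂ (fun y => Dx G (γ y, y)) 0 := by
        have h := analyticAt_Dx hG0
        rw [← hφ0] at h
        exact AnalyticAt.comp (f := fun y : ℂ => ((γ y, y) : ℂ × ℂ)) h hφ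
      have hDyφ : AnalyticAt ℂ (fun y => Dy G (γ y, y)) 0 := by
        have h := analyticAt_Dy hG0
        rw [← hφ0] at h
        exact AnalyticAt.comp (f := fun y : ℂ => ((γ y, y) : ℂ × ℂ)) h hφ
      have hvanDy : ∀ (c : ℂ) (k : ℕ), k < N → Dy^[k] (Dy G) (c, 0) = 0 := by
        intro c k hk
        rw [← Function.iterate_succ_apply]
        exact hvan c (k + 1) (by omega)
      have hvanDx : ∀ (c : ℂ) (k : ℕ), k < N → Dy^[k] (Dx G) (c, 0) = 0 := by
        intro c k hk
        rw [swap_iter k (hG c)]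
        have hslice : (fun x : ℂ => Dy^[k] G (x, 0)) = fun _ => (0 : ℂ) :=
          funext fun x => hvan x k (by omega)
        have hdiff : DifferentiableAt ℂ (Dy^[k] G) (c, 0) :=
          (analyticAt_Dy_iter (hG c) k).differentiableAt
        rw [← deriv_slice_x hdiff, hslice, deriv_const]
      have term2 : Vord N (fun y => Dy G (γ y, y)) :=
        ih (Dy G) (fun c => analyticAt_Dy (hG c)) hvanDy γ hγ hγ0
      have term1 : Vord N (fun y => deriv γ y * Dx G (γ y, y)) := by
        have hvord : Vord N (fun y => Dx G (γ y, y)) :=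
          ih (Dx G) (fun c => analyticAt_Dx (hG c)) hvanDx γ hγ hγ0
        exact vord_mul_left hDxφ hvord (analyticAt_deriv hγ)
      exact vord_add ((analyticAt_deriv hγ).mul hDxφ) hDyφ term1 term2 m (by omega)

theorem core2 : ∀ (N : ℕ) (G : ℂ × ℂ → ℂ), AnalyticAt ℂ G (0, 0) →
    (∀ᶠ y in nhds (0 : ℂ), G (0, y) = 0) →
    ∀ (γ : ℂ → ℂ), AnalyticAt ℂ γ 0 → Vord N γ → Vord N (fun y => G (γ y, y)) := by
  intro N
  induction N with
  | zero => intro G _ _ γ _ _ n hn; omega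
  | succ N ih =>
    intro G hG hvan γ hγ hγv n hn
    have hγ0 : γ 0 = 0 := by simpa [iteratedDeriv_zero] using hγv 0 (by omega)
    match n with
    | 0 =>
      rw [iteratedDeriv_zero]
      show G (γ 0, 0) = 0
      rw [hγ0]
      exact hvan.self_of_nhds
    | (m + 1) =>
      rw [iteratedDeriv_succ', iterD_congr (deriv_comp_curve hG hγ hγ0) m]
      have hφ : AnalyticAt ℂ (fun y : ℂ => (γ y, y)) 0 := hγ.prod analyticAt_id
      have hφ0 : ((γ 0, 0) : ℂ × ℂ) = ((0 : ℂ), (0 : ℂ)) := by rw [hγ0]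
      have hDxφ : AnalyticAt ℂ (fun y => Dx G (γ y, y)) 0 := by
        have h := analyticAt_Dx hG
        rw [← hφ0] at h
        exact AnalyticAt.comp (f := fun y : ℂ => ((γ y, y) : ℂ × ℂ)) h hφ
      have hDyφ : AnalyticAt ℂ (fun y => Dy G (γ y, y)) 0 := by
        have h := analyticAt_Dy hG
        rw [← hφ0] at h
        exact AnalyticAt.comp (f := fun y : ℂ => ((γ y, y) : ℂ × ℂ)) h hφ
      have hten : Tendsto (fun t : ℂ => (((0 : ℂ), t) : ℂ × ℂ)) (nhds 0) (nhds (0, 0)) :=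
        (continuous_const.prodMk continuous_id).continuousAt
      have hvan' : ∀ᶠ y in nhds (0 : ℂ), Dy G (0, y) = 0 := by
        filter_upwards [hten.eventually hG.eventually_analyticAt, hvan.eventually_nhds]
          with y hy1 hy2
        rw [← deriv_slice_y hy1.differentiableAt]
        have heq : (fun t : ℂ => G (0, t)) =ᶠ[nhds y] fun _ => (0 : ℂ) := hy2
        rw [heq.deriv_eq, deriv_const]
      have term2 : Vord N (fun y => Dy G (γ y, y)) :=
        ih (Dy G) (analyticAt_Dy hG) hvan' γ hγ (vord_mono hγv (by omega))
      have term1 : Vord N (fun y => deriv γ y * Dx G (γ y, y)) := by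
        have hγ' : Vord N (deriv γ) := vord_deriv hγv
        exact vord_mul_right (analyticAt_deriv hγ) hγ' hDxφ
      exact vord_add ((analyticAt_deriv hγ).mul hDxφ) hDyφ term1 term2 m (by omega)
theorem ord₀_ge_iff' {u : ℂ → ℂ} {N : ℕ} : (N : ℕ∞) ≤ ord₀ u ↔ Vord N u := ord₀_ge_iff

/-- For `f` analytic near `(0,0)` and `α` analytic near `0` with `α(0)=0`,
the generic gradient order `Λ(e) = gradOrdPert f α e` is (i) monotone nondecreasing in
the perturbation degree `e ≥ 1`, and (ii) if `f_x` and `f_y` do not both vanish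
identically along `α` near `0` and `L` is the minimum of their vanishing orders along
`α`, then `Λ(e) = L` for every `e > L`. -/
theorem generic_gradient_order_monotone_and_stabilizes
    (f : ℂ × ℂ → ℂ) (hf : AnalyticAt ℂ f (0, 0))
    (α : ℂ → ℂ) (hα : AnalyticAt ℂ α 0) (hα0 : α 0 = 0) :
    (∀ e e' : ℕ, 1 ≤ e → e ≤ e' → gradOrdPert f α e ≤ gradOrdPert f α e') ∧
    (¬ ((∀ᶠ y in nhds (0 : ℂ), fderiv ℂ f (α y, y) (1, 0) = 0) ∧
        (∀ᶠ y in nhds (0 : ℂ), fderiv ℂ f (α y, y) (0, 1) = 0)) →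
      ∀ L : ℕ,
        min (ord₀ (fun y => fderiv ℂ f (α y, y) (1, 0)))
            (ord₀ (fun y => fderiv ℂ f (α y, y) (0, 1))) = (L : ℕ∞) →
        ∀ e : ℕ, L < e → gradOrdPert f α e = (L : ℕ∞)) := by
  have hαsnd : ∀ c : ℂ, AnalyticAt ℂ (fun p : ℂ × ℂ => α p.2) (c, 0) := fun c =>
    AnalyticAt.comp (f := fun p : ℂ × ℂ => p.2) (x := ((c, 0) : ℂ × ℂ)) hα analyticAt_snd
  constructor
  · -- monotonicity
    intro e e' he hee'
    rcases eq_or_lt_of_le hee' with rfl | hlt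
    · exact le_rfl
    apply enat_le_of_forall
    intro N hN
    rw [gradOrdPert, le_iInf_iff] at hN ⊢
    intro u
    rw [le_min_iff]
    have hNall : ∀ v : ℂ, (N : ℕ∞) ≤ ord₀ (fun y => fderiv ℂ f (α y + v * y ^ e, y) (1, 0))
        ∧ (N : ℕ∞) ≤ ord₀ (fun y => fderiv ℂ f (α y + v * y ^ e, y) (0, 1)) :=
      fun v => le_min_iff.mp (hN v)
    have hsub : e' - e ≠ 0 := by omega
    have main : ∀ v : ℂ × ℂ,
        (∀ c : ℂ, Vord N (fun y => fderiv ℂ f (α y + c * y ^ e, y) v)) →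
        Vord N (fun y => fderiv ℂ f (α y + u * y ^ e', y) v) := by
      intro v hall
      have hFv : AnalyticAt ℂ (fun p : ℂ × ℂ => fderiv ℂ f p v) (0, 0) :=
        analyticAt_clmApply hf v
      have hGan : ∀ c : ℂ, AnalyticAt ℂ
          (fun p : ℂ × ℂ => fderiv ℂ f (α p.2 + p.1 * p.2 ^ e, p.2) v) (c, 0) := by
        intro c
        have hψ : AnalyticAt ℂ (fun p : ℂ × ℂ => ((α p.2 + p.1 * p.2 ^ e : ℂ), p.2)) (c, 0) :=
          ((hαsnd c).add (analyticAt_fst.mul (analyticAt_snd.pow e))).prod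
            analyticAt_snd
        have hpt : ((α (c, (0:ℂ)).2 + (c, (0:ℂ)).1 * (c, (0:ℂ)).2 ^ e, (c, (0:ℂ)).2) : ℂ × ℂ)
            = ((0 : ℂ), (0 : ℂ)) := by
          simp [hα0, zero_pow (by omega : e ≠ 0)]
        have h := hFv
        rw [← hpt] at h
        exact AnalyticAt.comp (f := fun p : ℂ × ℂ => ((α p.2 + p.1 * p.2 ^ e : ℂ), p.2)) h hψ
      have hvan : ∀ (c : ℂ) (n : ℕ), n < N →
          Dy^[n] (fun p : ℂ × ℂ => fderiv ℂ f (α p.2 + p.1 * p.2 ^ e, p.2) v) (c, 0) = 0 := by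
        intro c n hn
        rw [← iteratedDeriv_slice n (hGan c)]
        exact hall c n hn
      have hγ : AnalyticAt ℂ (fun y : ℂ => u * y ^ (e' - e)) 0 :=
        analyticAt_const.mul (analyticAt_id.pow _)
      have hγ0 : (fun y : ℂ => u * y ^ (e' - e)) 0 = 0 := by simp [zero_pow hsub]
      have hres := core1 N _ hGan hvan _ hγ hγ0
      have hfun : (fun y : ℂ => fderiv ℂ f (α y + u * y ^ (e' - e) * y ^ e, y) v)
          = (fun y : ℂ => fderiv ℂ f (α y + u * y ^ e', y) v) := by
        funext y
        rw [mul_assoc, ← pow_add, Nat.sub_add_cancel hee']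
      rw [← hfun]
      exact hres
    constructor
    · rw [ord₀_ge_iff']
      exact main (1, 0) (fun c => ord₀_ge_iff'.mp (hNall c).1)
    · rw [ord₀_ge_iff']
      exact main (0, 1) (fun c => ord₀_ge_iff'.mp (hNall c).2)
  · -- stabilization
    intro _ L hmin e he
    have heL : L ≤ e := le_of_lt he
    have he0 : e ≠ 0 := by omega
    have hbase := le_min_iff.mp (le_of_eq hmin.symm)
    have hbx : Vord L (fun y => fderiv ℂ f (α y, y) (1, 0)) := ord₀_ge_iff'.mp hbase.1
    have hby : Vord L (fun y => fderiv ℂ f (α y, y) (0, 1)) := ord₀_ge_iff'.mp hbase.2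
    apply le_antisymm
    · rw [gradOrdPert]
      apply iInf_le_of_le 0
      simp only [zero_mul, add_zero]
      exact le_of_eq hmin
    · rw [gradOrdPert]
      refine le_iInf fun u => ?_
      rw [le_min_iff]
      have hγ : AnalyticAt ℂ (fun y : ℂ => u * y ^ e) 0 :=
        analyticAt_const.mul (analyticAt_id.pow _)
      have hγv : Vord L (fun y : ℂ => u * y ^ e) := by
        have h := vord_pow_mul e (analyticAt_const (v := u))
        have hfun : (fun y : ℂ => y ^ e * (fun _ : ℂ => u) y) = fun y : ℂ => u * y ^ e := by
          funext y
          show y ^ e * u = u * y ^ e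
          ring
        rw [hfun] at h
        exact vord_mono h heL
      have hφ2 : AnalyticAt ℂ (fun y : ℂ => ((u * y ^ e, y) : ℂ × ℂ)) 0 := hγ.prod analyticAt_id
      have hαid : AnalyticAt ℂ (fun y : ℂ => ((α y, y) : ℂ × ℂ)) 0 := hα.prod analyticAt_id
      have key : ∀ v : ℂ × ℂ, Vord L (fun y => fderiv ℂ f (α y, y) v) →
          Vord L (fun y => fderiv ℂ f (α y + u * y ^ e, y) v) := by
        intro v hbv
        have hFv : AnalyticAt ℂ (fun p : ℂ × ℂ => fderiv ℂ f p v) (0, 0) :=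
          analyticAt_clmApply hf v
        have hψ1 : AnalyticAt ℂ (fun p : ℂ × ℂ => ((α p.2 + p.1 : ℂ), p.2)) ((0:ℂ), (0:ℂ)) :=
          ((hαsnd 0).add analyticAt_fst).prod analyticAt_snd
        have hψ2 : AnalyticAt ℂ (fun p : ℂ × ℂ => ((α p.2 : ℂ), p.2)) ((0:ℂ), (0:ℂ)) :=
          (hαsnd 0).prod analyticAt_snd
        have hc1 : AnalyticAt ℂ (fun p : ℂ × ℂ => fderiv ℂ f (α p.2 + p.1, p.2) v) (0, 0) := by
          have hpt : ((α ((0:ℂ),(0:ℂ)).2 + ((0:ℂ),(0:ℂ)).1, ((0:ℂ),(0:ℂ)).2) : ℂ × ℂ)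
              = ((0 : ℂ), (0 : ℂ)) := by simp [hα0]
          have h := hFv
          rw [← hpt] at h
          exact AnalyticAt.comp (f := fun p : ℂ × ℂ => ((α p.2 + p.1 : ℂ), p.2)) h hψ1
        have hc2 : AnalyticAt ℂ (fun p : ℂ × ℂ => fderiv ℂ f (α p.2, p.2) v) (0, 0) := by
          have hpt : ((α ((0:ℂ),(0:ℂ)).2, ((0:ℂ),(0:ℂ)).2) : ℂ × ℂ) = ((0 : ℂ), (0 : ℂ)) := by
            simp [hα0]
          have h := hFv
          rw [← hpt] at h
          exact AnalyticAt.comp (f := fun p : ℂ × ℂ => ((α p.2 : ℂ), p.2)) h hψ2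
        have hG : AnalyticAt ℂ (fun p : ℂ × ℂ =>
            fderiv ℂ f (α p.2 + p.1, p.2) v - fderiv ℂ f (α p.2, p.2) v) (0, 0) := hc1.sub hc2
        have hvan : ∀ᶠ y in nhds (0 : ℂ), (fun p : ℂ × ℂ =>
            fderiv ℂ f (α p.2 + p.1, p.2) v - fderiv ℂ f (α p.2, p.2) v) (0, y) = 0 := by
          filter_upwards with y
          simp
        have hres := core2 L _ hG hvan _ hγ hγv
        have hd1 : AnalyticAt ℂ (fun y : ℂ =>
            fderiv ℂ f (α y + u * y ^ e, y) v - fderiv ℂ f (α y, y) v) 0 := by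
          have hpt : ((α (u * (0:ℂ) ^ e, (0:ℂ)).2 + (u * (0:ℂ) ^ e, (0:ℂ)).1,
              (u * (0:ℂ) ^ e, (0:ℂ)).2) : ℂ × ℂ) = ((0 : ℂ), (0 : ℂ)) := by
            simp [hα0, zero_pow he0]
          have h := hG
          have hpt2 : ((u * (0:ℂ) ^ e, (0:ℂ)) : ℂ × ℂ) = ((0 : ℂ), (0 : ℂ)) := by
            simp [zero_pow he0]
          rw [← hpt2] at h
          exact AnalyticAt.comp (f := fun y : ℂ => ((u * y ^ e, y) : ℂ × ℂ)) h hφ2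
        have hd2 : AnalyticAt ℂ (fun y : ℂ => fderiv ℂ f (α y, y) v) 0 := by
          have hpt : ((α 0, (0:ℂ)) : ℂ × ℂ) = ((0 : ℂ), (0 : ℂ)) := by rw [hα0]
          have h := hFv
          rw [← hpt] at h
          exact AnalyticAt.comp (f := fun y : ℂ => ((α y, y) : ℂ × ℂ)) h hαid
        have hcomb := vord_add hd1 hd2 hres hbv
        have hfun : (fun y : ℂ => (fderiv ℂ f (α y + u * y ^ e, y) v
            - fderiv ℂ f (α y, y) v) + fderiv ℂ f (α y, y) v)
            = fun y : ℂ => fderiv ℂ f (α y + u * y ^ e, y) v := by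
          funext y
          ring
        rw [← hfun]
        exact hcomb
      exact ⟨(ord₀_ge_iff' (N := L)).mpr (key (1, 0) hbx),
        (ord₀_ge_iff' (N := L)).mpr (key (0, 1) hby)⟩
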